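/- Let h and k be n×n complex matrices such that D_h(ρ) = D_k(ρ) for every n×n matrix ρ. If h is not normal (i.e. h h† ≠ h† h), then there exists a complex number c with |c| = 1 such that k = c·h. That is, the operator h generating a simple Lindblad generator is unique up to a phase factor unless h is normal. -/

import Mathlib

open Matrix

/-- The simple Lindblad generator `D_h`. -/
noncomputable def lindblad {n : ℕ} (h ρ : Matrix (Fin n) (Fin n) ℂ) :
    Matrix (Fin n) (Fin n) ℂ :=
  h * ρ * hᴴ - (1 / 2 : ℂ) • (hᴴ * h * ρ + ρ * (hᴴ * h))

private lemma triple_apply {n : ℕ} (A B : Matrix (Fin n) (Fin n) ℂ) (i j p q : Fin n) :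
    (A * Matrix.single i j (1:ℂ) * B) p q = A p i * B j q := by
  simp [mul_apply, Matrix.single, ite_and, Finset.sum_mul]

private lemma mulE_apply {n : ℕ} (G : Matrix (Fin n) (Fin n) ℂ) (i j p q : Fin n) :
    (G * Matrix.single i j (1:ℂ)) p q = if q = j then G p i else 0 := by
  simp [mul_apply, Matrix.single, ite_and, eq_comm]

private lemma Emul_apply {n : ℕ} (G : Matrix (Fin n) (Fin n) ℂ) (i j p q : Fin n) :
    (Matrix.single i j (1:ℂ) * G) p q = if p = i then G j q else 0 := by
  simp [mul_apply, Matrix.single, ite_and, eq_comm]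

private lemma trace_self_zero {n : ℕ} (A : Matrix (Fin n) (Fin n) ℂ)
    (h : trace (Aᴴ * A) = 0) : A = 0 := by
  ext i j
  have hr : (∑ p, ∑ q, Complex.normSq (A q p) : ℝ) = 0 := by
    have h2 : ((∑ p, ∑ q, Complex.normSq (A q p) : ℝ) : ℂ) = 0 := by
      push_cast
      rw [← h]
      simp only [trace, diag, mul_apply, conjTranspose_apply, Complex.star_def,
        Complex.normSq_eq_conj_mul_self]
    exact_mod_cast h2
  have h3 := (Finset.sum_eq_zero_iff_of_nonneg
    (fun p _ => Finset.sum_nonneg (fun q _ => Complex.normSq_nonneg _))).mp hr j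
    (Finset.mem_univ j)
  have h4 := (Finset.sum_eq_zero_iff_of_nonneg
    (fun q _ => Complex.normSq_nonneg _)).mp h3 i (Finset.mem_univ i)
  simpa using Complex.normSq_eq_zero.mp h4

theorem stmt5 {n : ℕ} (h k : Matrix (Fin n) (Fin n) ℂ)
    (heq : ∀ ρ : Matrix (Fin n) (Fin n) ℂ, lindblad h ρ = lindblad k ρ)
    (hnotnormal : h * hᴴ ≠ hᴴ * h) :
    ∃ c : ℂ, ‖c‖ = 1 ∧ k = c • h := by
  classical
  set G : Matrix (Fin n) (Fin n) ℂ := hᴴ * h - kᴴ * k with hGdef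
  have key : ∀ ρ, h * ρ * hᴴ - k * ρ * kᴴ = (1/2:ℂ) • (G * ρ + ρ * G) := by
    intro ρ
    have H := heq ρ
    unfold lindblad at H
    have h2 : h * ρ * hᴴ - k * ρ * kᴴ =
        (1/2:ℂ) • (hᴴ*h*ρ + ρ*(hᴴ*h)) - (1/2:ℂ) • (kᴴ*k*ρ + ρ*(kᴴ*k)) :=
      sub_eq_sub_iff_sub_eq_sub.mp H
    rw [h2, ← smul_sub]
    congr 1
    rw [hGdef]
    simp only [Matrix.sub_mul, Matrix.mul_sub]
    abel
  have E1 : ∀ i j p q : Fin n, h p i * star (h q j) - k p i * star (k q j)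
      = (1/2:ℂ) * ((if q = j then G p i else 0) + (if p = i then G j q else 0)) := by
    intro i j p q
    have H := congrFun (congrFun (key (Matrix.single i j 1)) p) q
    simp only [Matrix.sub_apply, Matrix.smul_apply, Matrix.add_apply, smul_eq_mul, triple_apply,
      mulE_apply, Emul_apply, conjTranspose_apply] at H
    exact H
  -- the contracted identity
  have star1 : ∀ N : Matrix (Fin n) (Fin n) ℂ,
      trace (hᴴ * N) • h - trace (kᴴ * N) • k
        = (1/2:ℂ) • (trace N • G + trace (G * N) • (1 : Matrix (Fin n) (Fin n) ℂ)) := by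
    intro N
    ext p i
    simp only [Matrix.sub_apply, Matrix.smul_apply, Matrix.add_apply, smul_eq_mul, one_apply,
      trace, diag, mul_apply, conjTranspose_apply]
    have L : (∑ j, ∑ q, star (h q j) * N q j) * h p i
        - (∑ j, ∑ q, star (k q j) * N q j) * k p i
        = ∑ j : Fin n, ∑ q : Fin n, N q j * (h p i * star (h q j) - k p i * star (k q j)) := by
      simp only [Finset.sum_mul, ← Finset.sum_sub_distrib]
      congr 1; ext j; congr 1; ext q; ring
    rw [L]
    have L2 : ∀ j q : Fin n, N q j * (h p i * star (h q j) - k p i * star (k q j))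
        = (1/2:ℂ) * ((if q = j then N q j * G p i else 0)
            + (if p = i then N q j * G j q else 0)) := by
      intro j q
      rw [E1 i j p q]
      by_cases h1 : q = j <;> by_cases h2 : p = i <;> simp [h1, h2] <;> ring
    simp only [L2]
    by_cases h2 : p = i
    · simp only [h2, if_true]
      have R1 : ∀ x : Fin n, ∑ x1 : Fin n,
          (1/2:ℂ) * ((if x1 = x then N x1 x * G p i else 0) + N x1 x * G x x1)
          = (1/2:ℂ) * (N x x * G p i + ∑ x1, N x1 x * G x x1) := by
        intro x
        rw [← Finset.mul_sum]
        congr 1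
        rw [Finset.sum_add_distrib, Finset.sum_ite_eq']
        simp
      simp only [R1, ← Finset.mul_sum]
      congr 1
      simp only [Finset.sum_add_distrib, Finset.sum_ite_eq', Finset.mem_univ, if_true, mul_one]
      congr 1
      · rw [Finset.sum_mul]
      · exact Finset.sum_congr rfl fun x _ => Finset.sum_congr rfl fun y _ => mul_comm _ _
    · simp only [h2, if_false, mul_zero, add_zero]
      have R1 : ∀ x : Fin n, ∑ x1 : Fin n,
          (1/2:ℂ) * ((if x1 = x then N x1 x * G p i else 0) + 0)
          = (1/2:ℂ) * (N x x * G p i) := by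
        intro x
        rw [← Finset.mul_sum]
        congr 1
        simp [Finset.sum_ite_eq']
      simp only [R1, ← Finset.mul_sum]
      congr 1
      simp only [Finset.sum_ite_eq', Finset.mem_univ, if_true]
      rw [Finset.sum_mul]
  -- basic facts
  have hne : h ≠ 0 := fun h0 => hnotnormal (by simp [h0])
  have hMne : h * hᴴ - hᴴ * h ≠ 0 := sub_ne_zero_of_ne hnotnormal
  have heq1 : h * hᴴ - hᴴ * h = k * kᴴ - kᴴ * k := by
    have hk1 := key 1
    simp only [Matrix.mul_one, Matrix.one_mul] at hk1
    have h12 : (1/2:ℂ) • (G + G) = G := by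
      rw [← two_smul ℂ G, smul_smul]; norm_num
    rw [h12, hGdef] at hk1
    exact sub_eq_sub_iff_sub_eq_sub.mp hk1
  have kne : k ≠ 0 := by
    intro k0
    apply hMne
    rw [heq1, k0]
    simp
  by_cases hdep : ∃ d : ℂ, h = d • k
  · obtain ⟨d, hd⟩ := hdep
    have dne : d ≠ 0 := by
      intro d0
      exact hne (by rw [hd, d0, zero_smul])
    have hM2 : (d * star d) • (k * kᴴ - kᴴ * k) = k * kᴴ - kᴴ * k := by
      have : h * hᴴ - hᴴ * h = (d * star d) • (k * kᴴ - kᴴ * k) := by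
        rw [hd, conjTranspose_smul]
        rw [smul_mul_assoc, smul_mul_assoc, mul_smul_comm, mul_smul_comm,
          smul_smul, smul_smul, smul_sub]
        ring_nf
      rw [← this, heq1]
    have hM3 : k * kᴴ - kᴴ * k ≠ 0 := by rw [← heq1]; exact hMne
    have hd1 : d * star d = 1 := by
      obtain ⟨i, j, hij⟩ : ∃ i j, (k * kᴴ - kᴴ * k) i j ≠ 0 := by
        by_contra hc
        push_neg at hc
        exact hM3 (by ext i j; simpa using hc i j)
      have := congrFun (congrFun hM2 i) j
      simp only [Matrix.smul_apply, smul_eq_mul] at this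
      have h2 : (d * star d - 1) * (k * kᴴ - kᴴ * k) i j = 0 := by
        rw [sub_mul, one_mul, this, sub_self]
      rcases mul_eq_zero.mp h2 with h3 | h3
      · exact sub_eq_zero.mp h3
      · exact absurd h3 hij
    have habs : ‖d‖ = 1 := by
      have : Complex.normSq d = 1 := by
        have := hd1
        rw [Complex.star_def, Complex.mul_conj] at this
        exact_mod_cast this
      have h2 : ‖d‖ ^ 2 = 1 := by rw [Complex.sq_norm, this]
      nlinarith [norm_nonneg d]
    refine ⟨d⁻¹, ?_, ?_⟩
    · rw [norm_inv, habs, inv_one]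
    · rw [hd, smul_smul, inv_mul_cancel₀ dne, one_smul]
  · exfalso
    push_neg at hdep
    set c : ℂ := trace (kᴴ * h) / trace (kᴴ * k) with hc
    set N0 : Matrix (Fin n) (Fin n) ℂ := h - c • k with hN0
    have htrk : trace (kᴴ * k) ≠ 0 := fun h0 => kne (trace_self_zero k h0)
    have hN0ne : N0 ≠ 0 := by
      intro h0
      exact hdep c (by rw [← sub_eq_zero]; exact h0)
    have hkN0 : trace (kᴴ * N0) = 0 := by
      rw [hN0, Matrix.mul_sub, Matrix.mul_smul, trace_sub, trace_smul, smul_eq_mul, hc]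
      field_simp
      simp
    have hhN0 : trace (hᴴ * N0) = trace (N0ᴴ * N0) := by
      have hrw : h = N0 + c • k := by rw [hN0]; abel
      calc trace (hᴴ * N0) = trace ((N0 + c • k)ᴴ * N0) := by rw [← hrw]
        _ = trace (N0ᴴ * N0) + star c * trace (kᴴ * N0) := by
            rw [conjTranspose_add, conjTranspose_smul, Matrix.add_mul,
              Matrix.smul_mul, trace_add, trace_smul, smul_eq_mul]
        _ = trace (N0ᴴ * N0) := by rw [hkN0, mul_zero, add_zero]
    have hN0tr : trace (N0ᴴ * N0) ≠ 0 := fun h0 => hN0ne (trace_self_zero N0 h0)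
    set N : Matrix (Fin n) (Fin n) ℂ := (trace (N0ᴴ * N0))⁻¹ • N0 with hNdef
    have h1 : trace (hᴴ * N) = 1 := by
      rw [hNdef, Matrix.mul_smul, trace_smul, smul_eq_mul, hhN0,
        inv_mul_cancel₀ hN0tr]
    have h2 : trace (kᴴ * N) = 0 := by
      rw [hNdef, Matrix.mul_smul, trace_smul, smul_eq_mul, hkN0, mul_zero]
    have hstar := star1 N
    rw [h1, h2] at hstar
    simp only [one_smul, zero_smul, sub_zero] at hstar
    set a : ℂ := (1/2) * trace N with ha
    set b : ℂ := (1/2) * trace (G * N) with hb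
    have hform : h = a • G + b • (1 : Matrix (Fin n) (Fin n) ℂ) := by
      rw [hstar, smul_add, smul_smul, smul_smul, ha, hb]
    have hGH : Gᴴ = G := by
      rw [hGdef]
      simp [conjTranspose_sub, conjTranspose_mul]
    have hadj : hᴴ = star a • G + star b • (1 : Matrix (Fin n) (Fin n) ℂ) := by
      rw [hform, conjTranspose_add, conjTranspose_smul, conjTranspose_smul,
        conjTranspose_one, hGH]
    apply hnotnormal
    rw [hadj, hform]
    simp only [Matrix.add_mul, Matrix.mul_add, Matrix.smul_mul, Matrix.mul_smul,
      smul_smul, Matrix.mul_one, Matrix.one_mul]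
    simp only [smul_add, smul_smul]
    rw [mul_comm (star a) a, mul_comm (star a) b, mul_comm (star b) a, mul_comm (star b) b]
    abel
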